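/- arXiv:1308.5369 — 2 statements merged into one kernel-verified Lean document; each statement's English description precedes it below -/
import Mathlib

section
/- Let r ≥ 1 be an integer and let κ₁, κ₂, χ, c₁, c₂ be real numbers, with a = χ(c₁+c₂)/2. Every complex eigenvalue of the 2r×2r block matrix M has strictly negative real part if and only if a > κ₁ and a·(κ₂ − κ₁) > 0. -/
open Matrix Polynomial Kronecker

lemma quad_hurwitz_aux (b c : ℝ) :
    (∀ μ : ℂ, μ ^ 2 + (b : ℂ) * μ + (c : ℂ) = 0 → μ.re < 0) ↔ 0 < b ∧ 0 < c := by
  constructor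
  · intro h
    have hdeg : 0 < (C (1:ℂ) * X ^ 2 + C (b:ℂ) * X + C (c:ℂ)).degree := by
      rw [degree_quadratic one_ne_zero]; norm_num
    obtain ⟨μ, hμ⟩ := Complex.exists_root hdeg
    have hμ' : μ ^ 2 + (b : ℂ) * μ + (c : ℂ) = 0 := by
      simpa [IsRoot, eval_add, eval_mul, eval_pow] using hμ
    set ν : ℂ := -((b : ℂ) + μ) with hν
    have hν' : ν ^ 2 + (b : ℂ) * ν + (c : ℂ) = 0 := by
      rw [hν]; linear_combination hμ'
    have hre : μ.re < 0 := h μ hμ'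
    have hre' : ν.re < 0 := h ν hν'
    have hbsum : b = -(μ.re + ν.re) := by
      have : (b : ℂ) = -(μ + ν) := by rw [hν]; ring
      have := congrArg Complex.re this
      simpa using this
    have hcprod : (c : ℂ) = μ * ν := by rw [hν]; linear_combination hμ'
    have hνim : ν.im = -μ.im := by
      have := congrArg Complex.im hν
      simpa using this
    have hcre : c = μ.re * ν.re - μ.im * ν.im := by
      have := congrArg Complex.re hcprod
      simpa [Complex.mul_re] using this
    constructor
    · linarith
    · rw [hcre, hνim]; nlinarith [mul_pos (neg_pos.2 hre) (neg_pos.2 hre'), sq_nonneg μ.im]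
  · rintro ⟨hb, hc⟩ μ hμ
    by_contra h
    push_neg at h
    have h1 := congrArg Complex.re hμ
    have h2 := congrArg Complex.im hμ
    simp [pow_two, Complex.mul_re, Complex.mul_im] at h1 h2
    have h3 : μ.im * (2 * μ.re + b) = 0 := by linear_combination h2
    have him : μ.im = 0 := by
      rcases mul_eq_zero.1 h3 with h4 | h4
      · exact h4
      · linarith
    rw [him] at h1
    nlinarith [mul_nonneg h h, mul_nonneg hb.le h]

def psoSumProdEquiv (r : ℕ) : (Fin r ⊕ Fin r) ≃ (Fin 2 × Fin r) where
  toFun := Sum.elim (fun i => (0, i)) (fun i => (1, i))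
  invFun := fun p => if p.1 = 0 then Sum.inl p.2 else Sum.inr p.2
  left_inv := by rintro (i | i) <;> simp
  right_inv := by rintro ⟨k, i⟩; fin_cases k <;> simp

lemma pso_charpoly (r : ℕ) (κ₁ κ₂ a : ℝ) :
    ((Matrix.fromBlocks
      (κ₁ • (1 : Matrix (Fin r) (Fin r) ℝ))
      ((-a) • (1 : Matrix (Fin r) (Fin r) ℝ))
      (κ₂ • (1 : Matrix (Fin r) (Fin r) ℝ))
      ((-a) • (1 : Matrix (Fin r) (Fin r) ℝ))).map (algebraMap ℝ ℂ)).charpoly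
    = (X ^ 2 + C ((a : ℂ) - (κ₁ : ℂ)) * X + C ((a : ℂ) * ((κ₂ : ℂ) - (κ₁ : ℂ)))) ^ r := by
  set P : Matrix (Fin 2) (Fin 2) ℂ[X] :=
    !![X - C (κ₁ : ℂ), C (a : ℂ); -C (κ₂ : ℂ), X + C (a : ℂ)] with hP
  have hch : charmatrix ((Matrix.fromBlocks
      (κ₁ • (1 : Matrix (Fin r) (Fin r) ℝ))
      ((-a) • (1 : Matrix (Fin r) (Fin r) ℝ))
      (κ₂ • (1 : Matrix (Fin r) (Fin r) ℝ))
      ((-a) • (1 : Matrix (Fin r) (Fin r) ℝ))).map (algebraMap ℝ ℂ))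
      = (P ⊗ₖ (1 : Matrix (Fin r) (Fin r) ℂ[X])).submatrix (psoSumProdEquiv r) (psoSumProdEquiv r) := by
    ext i j
    rcases i with i | i <;> rcases j with j | j <;>
      by_cases hij : i = j <;>
      simp [charmatrix_apply, psoSumProdEquiv, Matrix.one_apply, hij,
        Matrix.diagonal_apply, hP, mul_comm]
  rw [Matrix.charpoly, hch, det_submatrix_equiv_self, det_kronecker, det_one, one_pow, mul_one,
    Fintype.card_fin, hP, det_fin_two_of]
  simp only [_root_.map_sub, _root_.map_mul]
  ring

/-- Hurwitz stability of the PSO drift block matrix `M = [[κ₁ I, -a I], [κ₂ I, -a I]]`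
(with `a = χ(c₁+c₂)/2`): every complex eigenvalue of `M` has strictly negative real part
iff `a > κ₁` and `a (κ₂ - κ₁) > 0`. -/
theorem pso_drift_hurwitz_iff (r : ℕ) (hr : 1 ≤ r) (κ₁ κ₂ χ c₁ c₂ a : ℝ)
    (ha : a = χ * (c₁ + c₂) / 2)
    (M : Matrix (Fin r ⊕ Fin r) (Fin r ⊕ Fin r) ℝ)
    (hM : M = Matrix.fromBlocks
      (κ₁ • (1 : Matrix (Fin r) (Fin r) ℝ))
      ((-a) • (1 : Matrix (Fin r) (Fin r) ℝ))
      (κ₂ • (1 : Matrix (Fin r) (Fin r) ℝ))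
      ((-a) • (1 : Matrix (Fin r) (Fin r) ℝ))) :
    (∀ μ : ℂ, ((M.map (algebraMap ℝ ℂ)).charpoly).IsRoot μ → μ.re < 0) ↔
      (κ₁ < a ∧ 0 < a * (κ₂ - κ₁)) := by
  subst hM
  rw [pso_charpoly r κ₁ κ₂ a]
  have hr0 : r ≠ 0 := by omega
  have key := quad_hurwitz_aux (a - κ₁) (a * (κ₂ - κ₁))
  push_cast at key
  simp only [IsRoot, eval_pow, pow_eq_zero_iff hr0, eval_add, eval_mul, eval_X, eval_C]
  rw [key]
  simp [sub_pos]
end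

section
/- Let M₁ be the real 4×4 matrix M₁ = [[−0.271, 0, −1.5, 0], [0, −0.271, 0, −1.5], [1, 0, −1.5, 0], [0, 1, 0, −1.5]]. Then every differentiable function θ : ℝ → ℝ⁴ satisfying θ'(t) = M₁·θ(t) for all t ≥ 0 converges to the zero vector as t → ∞. -/
open Matrix

private lemma pso_key_quad (a b c d : ℝ) :
    2*a*(-0.271*a + -1.5*c) + 2*b*(-0.271*b + -1.5*d)
      + 2*c*(a + -1.5*c) + 2*d*(b + -1.5*d)
      + 0.2*(a^2+b^2+c^2+d^2) ≤ 0 := by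
  nlinarith [sq_nonneg (342*a+500*c), sq_nonneg (342*b+500*d), sq_nonneg c, sq_nonneg d]

/-- Global asymptotic stability of the PSO limit ODE `θ' = M₁ θ` (two particles,
`F(x) = x²`, `χ = 1`, `κ₁ = -0.271`, `κ₂ = 1`, `c₁ = c₂ = 1.5`): every differentiable
solution converges to the zero vector as `t → ∞`. -/
theorem pso_example1_ode_convergence
    (M₁ : Matrix (Fin 4) (Fin 4) ℝ)
    (hM : M₁ = !![(-0.271 : ℝ), 0, -1.5, 0;
                  0, -0.271, 0, -1.5;
                  1, 0, -1.5, 0;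
                  0, 1, 0, -1.5])
    (θ : ℝ → Fin 4 → ℝ) (hθ : Differentiable ℝ θ)
    (hode : ∀ t : ℝ, 0 ≤ t → deriv θ t = M₁.mulVec (θ t)) :
    Filter.Tendsto θ Filter.atTop (nhds 0) := by
  set g : ℝ → ℝ := fun t => ∑ i, θ t i ^ 2 with hgdef
  -- derivative of each coordinate
  have hcoord : ∀ (i : Fin 4) (t : ℝ), HasDerivAt (fun s => θ s i) (deriv θ t i) t :=
    fun i t => hasDerivAt_pi.1 (hθ t).hasDerivAt i
  -- derivative of g
  have hgd : ∀ t, HasDerivAt g (∑ i, 2 * θ t i * deriv θ t i) t := by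
    intro t
    have h : ∀ i : Fin 4, HasDerivAt (fun s => θ s i ^ 2) (2 * θ t i * deriv θ t i) t := by
      intro i
      have := (hcoord i t).fun_pow 2
      simpa [mul_comm, mul_assoc, mul_left_comm] using this
    exact HasDerivAt.fun_sum (fun i _ => h i)
  -- key decay inequality on [0, ∞)
  have hdecay : ∀ t : ℝ, 0 ≤ t →
      (∑ i, 2 * θ t i * deriv θ t i) + 0.2 * g t ≤ 0 := by
    intro t ht
    rw [hode t ht, hM, hgdef]
    have hkey := pso_key_quad (θ t 0) (θ t 1) (θ t 2) (θ t 3)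
    norm_num [Fin.sum_univ_four, Matrix.mulVec, dotProduct,
      Matrix.cons_val_zero, Matrix.cons_val_one, Matrix.head_cons,
      Matrix.cons_val_two, Matrix.cons_val_three, Matrix.tail_cons]
    nlinarith [hkey]
  -- auxiliary function h = g * exp(0.2 t)
  set E : ℝ → ℝ := fun t => Real.exp (0.2 * t) with hEdef
  have hEd : ∀ t, HasDerivAt E (Real.exp (0.2 * t) * 0.2) t := by
    intro t
    have := ((hasDerivAt_id t).const_mul (0.2 : ℝ)).exp
    rw [hEdef]
    simpa using this
  set h : ℝ → ℝ := fun t => g t * E t with hhdef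
  have hhd : ∀ t, HasDerivAt h
      ((∑ i, 2 * θ t i * deriv θ t i) * E t + g t * (Real.exp (0.2 * t) * 0.2)) t :=
    fun t => (hgd t).mul (hEd t)
  have hanti : AntitoneOn h (Set.Ici 0) := by
    apply antitoneOn_of_deriv_nonpos (convex_Ici 0)
    · have hdiff : Differentiable ℝ h := fun t => (hhd t).differentiableAt
      exact hdiff.continuous.continuousOn
    · exact fun t _ => ((hhd t).differentiableAt).differentiableWithinAt
    · intro x hx
      rw [interior_Ici] at hx
      rw [(hhd x).deriv]
      have hk := hdecay x (le_of_lt hx)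
      have hEpos : 0 < Real.exp (0.2 * x) := Real.exp_pos _
      have : (∑ i, 2 * θ x i * deriv θ x i) * E x + g x * (Real.exp (0.2 * x) * 0.2)
          = ((∑ i, 2 * θ x i * deriv θ x i) + 0.2 * g x) * Real.exp (0.2 * x) := by
        simp only [hEdef]; ring
      rw [this]
      exact mul_nonpos_of_nonpos_of_nonneg hk hEpos.le
  -- g(t) ≤ g(0) * exp(-0.2 t) for t ≥ 0
  have hgnonneg : ∀ t, 0 ≤ g t := fun t => Finset.sum_nonneg (fun i _ => sq_nonneg _)
  have hbound : ∀ t : ℝ, 0 ≤ t → g t ≤ g 0 * Real.exp (-(0.2 * t)) := by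
    intro t ht
    have := hanti (Set.self_mem_Ici) ht ht
    have hE0 : E 0 = 1 := by simp [hEdef]
    rw [hhdef] at this
    simp only [hE0, mul_one] at this
    have hEpos : 0 < Real.exp (0.2 * t) := Real.exp_pos _
    rw [Real.exp_neg, ← div_eq_mul_inv, le_div_iff₀ hEpos]
    simpa [hEdef] using this
  -- g → 0
  have hgto : Filter.Tendsto g Filter.atTop (nhds 0) := by
    have hub : Filter.Tendsto (fun t => g 0 * Real.exp (-(0.2 * t))) Filter.atTop (nhds 0) := by
      have h1 : Filter.Tendsto (fun t : ℝ => 0.2 * t) Filter.atTop Filter.atTop :=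
        Filter.Tendsto.const_mul_atTop (by norm_num) Filter.tendsto_id
      have h2 : Filter.Tendsto (fun t : ℝ => Real.exp (-(0.2 * t))) Filter.atTop (nhds 0) :=
        Real.tendsto_exp_atBot.comp (Filter.tendsto_neg_atBot_iff.mpr h1)
      simpa using h2.const_mul (g 0)
    apply tendsto_of_tendsto_of_tendsto_of_le_of_le' tendsto_const_nhds hub
    · exact Filter.Eventually.of_forall (fun t => hgnonneg t)
    · filter_upwards [Filter.eventually_ge_atTop (0:ℝ)] with t ht using hbound t ht
  -- each coordinate tends to 0
  rw [tendsto_pi_nhds]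
  intro i
  have hsq : ∀ t, (θ t i) ^ 2 ≤ g t := by
    intro t
    exact Finset.single_le_sum (fun j _ => sq_nonneg (θ t j)) (Finset.mem_univ i)
  have habs : ∀ t, |θ t i| ≤ Real.sqrt (g t) := by
    intro t
    rw [← Real.sqrt_sq_eq_abs]
    exact Real.sqrt_le_sqrt (hsq t)
  have hsqrt : Filter.Tendsto (fun t => Real.sqrt (g t)) Filter.atTop (nhds 0) := by
    have := (Real.continuous_sqrt.tendsto 0).comp hgto
    simpa [Function.comp_def] using this
  simp only [Pi.zero_apply]
  exact tendsto_of_tendsto_of_tendsto_of_le_of_le (by simpa using hsqrt.neg) hsqrt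
    (fun t => (abs_le.mp (habs t)).1) (fun t => (abs_le.mp (habs t)).2)
end
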